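/- Let n be a positive integer, let W be an n×n real symmetric matrix with tr W > 0, and let R be any n×n real symmetric matrix. Then the function g(t) := σ₂(W + tR)/tr(W + tR) is twice differentiable at t = 0 and g''(0) = − tr( ((tr W)·R − (tr R)·W)² ) / (tr W)³. (Since (tr W)R − (tr R)W is symmetric, tr(((tr W)R − (tr R)W)²) = Σ_{i,j} (σ₁(W) r_{ij} − σ₁(R) w_{ij})², so this is exactly the Hessian identity Σ_{i,j,k,l} ∂²(σ₂/σ₁)/∂w_{ij}∂w_{kl} (W) r_{ij} r_{kl} = − Σ_{i,j} (σ₁(W) r_{ij} − σ₁(R) w_{ij})² / σ₁(W)³ evaluated in the direction R.) -/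

import Mathlib

open Matrix

/-- σ₂ of a matrix: `((tr W)² − tr(W²))/2`. -/
noncomputable def sigma2 {n : ℕ} (W : Matrix (Fin n) (Fin n) ℝ) : ℝ :=
  ((W.trace) ^ 2 - (W * W).trace) / 2

/-- For symmetric `W` with `tr W > 0` and symmetric `R`, the function
`g(t) = σ₂(W + tR)/tr(W + tR)` is twice differentiable at `t = 0` with
`g''(0) = − tr(((tr W)R − (tr R)W)²) / (tr W)³`. -/
theorem stmt2 (n : ℕ) (hn : 0 < n) (W R : Matrix (Fin n) (Fin n) ℝ)
    (hWsymm : W.IsSymm) (hRsymm : R.IsSymm) (htr : 0 < W.trace) :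
    (∀ᶠ t in nhds (0 : ℝ),
        DifferentiableAt ℝ (fun t : ℝ => sigma2 (W + t • R) / (W + t • R).trace) t) ∧
      HasDerivAt (deriv (fun t : ℝ => sigma2 (W + t • R) / (W + t • R).trace))
        (-(((W.trace • R - R.trace • W) * (W.trace • R - R.trace • W)).trace)
          / (W.trace) ^ 3) 0 := by
  set a : ℝ := W.trace with ha
  set b : ℝ := R.trace with hb
  set p : ℝ := (W * W).trace with hp
  set q : ℝ := (W * R).trace with hq
  set r : ℝ := (R * R).trace with hr
  have ha0 : a ≠ 0 := ne_of_gt htr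
  -- the explicit rational function
  set h : ℝ → ℝ := fun t => (a + t * b) / 2 - (p + 2 * t * q + t ^ 2 * r) / (2 * (a + t * b))
    with hh
  have hfun : (fun t : ℝ => sigma2 (W + t • R) / (W + t • R).trace) = h := by
    funext t
    have h1 : (W + t • R).trace = a + t * b := by
      simp [trace_add, trace_smul, smul_eq_mul, ha, hb]
    have h2 : sigma2 (W + t • R)
        = ((a + t * b) ^ 2 - (p + 2 * t * q + t ^ 2 * r)) / 2 := by
      simp [sigma2, mul_add, add_mul, trace_add, trace_smul, smul_mul_assoc, mul_smul_comm,
        smul_smul, Matrix.trace_mul_comm R W, smul_eq_mul]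
      ring
    rw [h1, h2, hh]
    set x := a + t * b
    rcases eq_or_ne x 0 with hx | hx
    · simp only []
      rw [show a + t * b = x from rfl, hx]
      simp
    · have hx' : a + t * b ≠ 0 := hx
      show ((a + t * b) ^ 2 - (p + 2 * t * q + t ^ 2 * r)) / 2 / (a + t * b)
        = (a + t * b) / 2 - (p + 2 * t * q + t ^ 2 * r) / (2 * (a + t * b))
      field_simp
  -- neighborhood where denominator is nonzero
  have hv_cont : Continuous (fun t : ℝ => a + t * b) := by continuity
  have hS : {t : ℝ | a + t * b ≠ 0} ∈ nhds (0 : ℝ) := by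
    have : IsOpen {t : ℝ | a + t * b ≠ 0} := isOpen_ne.preimage hv_cont
    exact this.mem_nhds (by simpa using ha0)
  -- derivative of h on that set
  set d : ℝ → ℝ := fun t => b / 2 -
      ((2 * q + 2 * t * r) * (2 * (a + t * b))
        - (p + 2 * t * q + t ^ 2 * r) * (2 * b)) / (2 * (a + t * b)) ^ 2 with hd
  have hderiv : ∀ t : ℝ, a + t * b ≠ 0 → HasDerivAt h (d t) t := by
    intro t ht
    have hv : HasDerivAt (fun t : ℝ => a + t * b) b t := by
      simpa using ((hasDerivAt_id t).mul_const b).const_add a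
    have hu : HasDerivAt (fun t : ℝ => p + 2 * t * q + t ^ 2 * r) (2 * q + 2 * t * r) t := by
      have h1 : HasDerivAt (fun t : ℝ => 2 * t * q) (2 * q) t := by
        simpa [mul_comm, mul_assoc, mul_left_comm] using
          (((hasDerivAt_id t).const_mul 2).mul_const q)
      have h2 : HasDerivAt (fun t : ℝ => t ^ 2 * r) (2 * t * r) t := by
        simpa using (hasDerivAt_pow 2 t).mul_const r
      exact (h1.const_add p).add h2
    have hden : HasDerivAt (fun t : ℝ => 2 * (a + t * b)) (2 * b) t := hv.const_mul 2
    have hden_ne : 2 * (a + t * b) ≠ 0 := mul_ne_zero two_ne_zero ht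
    exact (hv.div_const 2).sub (hu.div hden hden_ne)
  have hEq : deriv h =ᶠ[nhds 0] d := by
    filter_upwards [hS] with t ht using (hderiv t ht).deriv
  -- second derivative at 0 : differentiate d
  have hv0 : HasDerivAt (fun t : ℝ => a + t * b) b 0 := by
    simpa using ((hasDerivAt_id 0).mul_const b).const_add a
  have hden0 : HasDerivAt (fun t : ℝ => 2 * (a + t * b)) (2 * b) 0 := hv0.const_mul 2
  have hA : HasDerivAt (fun t : ℝ => 2 * q + 2 * t * r) (2 * r) 0 := by
    have : HasDerivAt (fun t : ℝ => 2 * t * r) (2 * r) 0 := by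
      simpa [mul_comm, mul_assoc, mul_left_comm] using
        (((hasDerivAt_id 0).const_mul 2).mul_const r)
    simpa using this.const_add (2 * q)
  have hu0 : HasDerivAt (fun t : ℝ => p + 2 * t * q + t ^ 2 * r)
      (2 * q + 2 * (0:ℝ) * r) 0 := by
    have h1 : HasDerivAt (fun t : ℝ => 2 * t * q) (2 * q) 0 := by
      simpa [mul_comm, mul_assoc, mul_left_comm] using
        (((hasDerivAt_id 0).const_mul 2).mul_const q)
    have h2 : HasDerivAt (fun t : ℝ => t ^ 2 * r) (2 * (0:ℝ) * r) 0 := by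
      simpa using (hasDerivAt_pow 2 (0:ℝ)).mul_const r
    exact (h1.const_add p).add h2
  have hN : HasDerivAt
      (fun t : ℝ => (2 * q + 2 * t * r) * (2 * (a + t * b))
        - (p + 2 * t * q + t ^ 2 * r) * (2 * b))
      (2 * r * (2 * (a + 0 * b)) + (2 * q + 2 * 0 * r) * (2 * b)
        - (2 * q + 2 * 0 * r) * (2 * b)) 0 :=
    (hA.mul hden0).sub (hu0.mul_const (2 * b))
  have hD : HasDerivAt (fun t : ℝ => (2 * (a + t * b)) ^ 2)
      ((2:ℕ) * (2 * (a + 0 * b)) ^ 1 * (2 * b)) 0 := hden0.pow 2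
  have hD0_ne : (2 * (a + 0 * b)) ^ 2 ≠ 0 := by
    simp only [zero_mul, add_zero]
    positivity
  have hQ := hN.div hD hD0_ne
  have hd0 : HasDerivAt d
      (-(((2 * r * (2 * (a + 0 * b)) + (2 * q + 2 * 0 * r) * (2 * b)
          - (2 * q + 2 * 0 * r) * (2 * b)) * ((2 * (a + 0 * b)) ^ 2)
        - ((2 * q + 2 * 0 * r) * (2 * (a + 0 * b))
            - (p + 2 * 0 * q + 0 ^ 2 * r) * (2 * b))
          * ((2:ℕ) * (2 * (a + 0 * b)) ^ 1 * (2 * b))) / ((2 * (a + 0 * b)) ^ 2) ^ 2)) 0 := by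
    simpa using hQ.const_sub (b / 2)
  have htrace : ((a • R - b • W) * (a • R - b • W)).trace
      = a ^ 2 * r - 2 * a * b * q + b ^ 2 * p := by
    simp [sub_mul, mul_sub, trace_sub, trace_smul, smul_mul_assoc, mul_smul_comm, smul_smul,
      Matrix.trace_mul_comm R W, smul_eq_mul, hp, hq, hr]
    ring
  have hval : HasDerivAt d
      (-(((a • R - b • W) * (a • R - b • W)).trace) / a ^ 3) 0 := by
    convert hd0 using 1
    rw [htrace]
    field_simp
    have h3 : a ^ 3 * a⁻¹ ^ 3 = 1 := by rw [← mul_pow, mul_inv_cancel₀ ha0, one_pow]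
    linear_combination (-(a * b * q * 4 - a ^ 2 * r * 2 - b ^ 2 * p * 2)) * h3
  refine ⟨?_, ?_⟩
  · rw [hfun]
    filter_upwards [hS] with t ht using (hderiv t ht).differentiableAt
  · rw [hfun]
    exact hval.congr_of_eventuallyEq hEq
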